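/- Let b ≥ 2, m ≥ 1, d ≥ 2, n = b^m, and let π_1,…,π_d be permutations of {1,…,m}. For 0 ≤ i < n write i = ∑_{k=1}^m a_{i,k} b^{k−1} with digits a_{i,k} ∈ {0,…,b−1}, and define x_{ij} = 1/n + ∑_{k=1}^m b^{−k} a_{i,π_j(k)}. Then for every z ∈ [0,1]^d, (1/n)·#{i : x_{ij} > 1−z_j for all j = 1,…,d} ≥ ∏_{j=1}^d z_j. -/

import Mathlib

open Finset

/-- A product of nonnegative monotone real functions is monotone. -/
lemma aux_mono_prod {α ι : Type*} [Preorder α] (s : Finset ι) (f : ι → α → ℝ)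
    (h0 : ∀ i a, 0 ≤ f i a) (hm : ∀ i, Monotone (f i)) :
    Monotone (fun a => ∏ i ∈ s, f i a) := by
  induction s using Finset.cons_induction with
  | empty => simpa using monotone_const
  | cons i s hi ih =>
    intro a a' h
    simp only [Finset.prod_cons]
    exact mul_le_mul (hm i h) (ih h) (Finset.prod_nonneg fun j _ => h0 j a) (h0 i a')

/-- Iterated Harris/FKG inequality for finitely many nonnegative monotone functions. -/
lemma aux_harris_iter {α : Type*} [DistribLattice α] [Fintype α] [DecidableEq α]
    {ι : Type*} (s : Finset ι) (f : ι → α → ℝ)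
    (h0 : ∀ i a, 0 ≤ f i a) (hm : ∀ i, Monotone (f i)) :
    (Fintype.card α : ℝ) * ∏ i ∈ s, (∑ a, f i a) ≤
      (Fintype.card α : ℝ) ^ s.card * ∑ a, ∏ i ∈ s, f i a := by
  induction s using Finset.cons_induction with
  | empty => simp
  | cons i s hi ih =>
    have hg0 : ∀ a, (0:ℝ) ≤ ∏ j ∈ s, f j a := fun a =>
      Finset.prod_nonneg fun j _ => h0 j a
    have key : (∑ a, f i a) * (∑ a, ∏ j ∈ s, f j a) ≤
        (Fintype.card α : ℝ) * ∑ a, f i a * ∏ j ∈ s, f j a := by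
      have := fkg (μ := fun _ : α => (1:ℝ)) (f := f i) (g := fun a => ∏ j ∈ s, f j a)
        zero_le_one (fun a => h0 i a) hg0 (hm i) (aux_mono_prod s f h0 hm)
        (by intro a b; simp)
      simpa using this
    have hfi0 : (0:ℝ) ≤ ∑ a, f i a := Finset.sum_nonneg fun a _ => h0 i a
    have hcpos : (0:ℝ) ≤ (Fintype.card α : ℝ) ^ s.card := by positivity
    calc (Fintype.card α : ℝ) * ∏ j ∈ cons i s hi, (∑ a, f j a)
        = (∑ a, f i a) * ((Fintype.card α : ℝ) * ∏ j ∈ s, (∑ a, f j a)) := by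
          rw [Finset.prod_cons]; ring
      _ ≤ (∑ a, f i a) * ((Fintype.card α : ℝ) ^ s.card * ∑ a, ∏ j ∈ s, f j a) :=
          mul_le_mul_of_nonneg_left ih hfi0
      _ = (Fintype.card α : ℝ) ^ s.card * ((∑ a, f i a) * ∑ a, ∏ j ∈ s, f j a) := by ring
      _ ≤ (Fintype.card α : ℝ) ^ s.card *
            ((Fintype.card α : ℝ) * ∑ a, f i a * ∏ j ∈ s, f j a) :=
          mul_le_mul_of_nonneg_left key hcpos
      _ = (Fintype.card α : ℝ) ^ (cons i s hi).card * ∑ a, ∏ j ∈ cons i s hi, f j a := by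
          rw [Finset.card_cons, pow_succ]
          simp only [Finset.prod_cons]
          ring

/-- Digits of the number encoded by `finFunctionFinEquiv`. -/
lemma aux_digit {b m : ℕ} (f : Fin m → Fin b) (k : Fin m) :
    ((finFunctionFinEquiv f : ℕ) / b ^ (k:ℕ) % b) = (f k : ℕ) := by
  conv_rhs => rw [← finFunctionFinEquiv.symm_apply_apply f]
  rfl

/-- Shifted permutation digital nets oversample upper anchored boxes: with
`x_{ij} = 1/n + ∑_k b^{-k} a_{i,π_j(k)}` (digits of `i` in base `b` permuted by `π_j`),
for every `z ∈ [0,1]^d` the fraction of points with `x_{ij} > 1 - z_j` for all `j` is at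
least `∏_j z_j`. -/
theorem stmt12 (b m d : ℕ) (hb : 2 ≤ b) (hm : 1 ≤ m) (hd : 2 ≤ d)
    (π : Fin d → Equiv.Perm (Fin m))
    (z : Fin d → ℝ) (hz : ∀ j, z j ∈ Set.Icc (0:ℝ) 1) :
    ∏ j, z j ≤ (Nat.card {i : Fin (b ^ m) // ∀ j,
        1 - z j < 1 / (b ^ m : ℝ) +
          ∑ k : Fin m, (((i : ℕ) / b ^ ((π j k : ℕ)) % b : ℕ) : ℝ) * ((b : ℝ))⁻¹ ^ ((k : ℕ) + 1)} : ℝ)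
      / (b ^ m : ℝ) := by
  classical
  have hb0 : 0 < b := by omega
  have hbR : (0:ℝ) < (b:ℝ) := by exact_mod_cast hb0
  have hn0 : 0 < b ^ m := pow_pos hb0 m
  have hnR : (0:ℝ) < ((b ^ m : ℕ) : ℝ) := by exact_mod_cast hn0
  set Q : Fin d → (Fin m → Fin b) → Prop := fun j a =>
    1 - z j < 1 / (b ^ m : ℝ) +
      ∑ k : Fin m, ((a (π j k) : ℕ) : ℝ) * ((b : ℝ))⁻¹ ^ ((k : ℕ) + 1) with hQdef
  set e : (Fin m → Fin b) ≃ Fin (b ^ m) := finFunctionFinEquiv with he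
  -- Step A: identify the count with a filter over digit vectors
  have hcard : Nat.card {i : Fin (b ^ m) // ∀ j,
        1 - z j < 1 / (b ^ m : ℝ) +
          ∑ k : Fin m, (((i : ℕ) / b ^ ((π j k : ℕ)) % b : ℕ) : ℝ) * ((b : ℝ))⁻¹ ^ ((k : ℕ) + 1)}
      = (univ.filter fun a : Fin m → Fin b => ∀ j, Q j a).card := by
    have hEq : ∀ a : Fin m → Fin b, (∀ j, Q j a) ↔ (∀ j,
        1 - z j < 1 / (b ^ m : ℝ) +
          ∑ k : Fin m, ((((e a : ℕ)) / b ^ ((π j k : ℕ)) % b : ℕ) : ℝ)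
            * ((b : ℝ))⁻¹ ^ ((k : ℕ) + 1)) := by
      intro a
      simp only [he, aux_digit, hQdef]
    rw [← Nat.card_congr (Equiv.subtypeEquiv e hEq)]
    rw [Nat.card_eq_fintype_card, Fintype.card_subtype]
  -- monotonicity of each constraint
  have hQmono : ∀ j, ∀ ⦃a a' : Fin m → Fin b⦄, a ≤ a' → Q j a → Q j a' := by
    intro j a a' hle h
    refine h.trans_le (add_le_add (le_refl _) (Finset.sum_le_sum fun k _ => ?_))
    refine mul_le_mul_of_nonneg_right ?_ (by positivity)
    exact_mod_cast (hle (π j k) : a (π j k) ≤ a' (π j k))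
  -- indicators
  set F : Fin d → (Fin m → Fin b) → ℝ := fun j a => if Q j a then 1 else 0 with hF
  have hF0 : ∀ j a, 0 ≤ F j a := by intro j a; dsimp [F]; split <;> norm_num
  have hFmono : ∀ j, Monotone (F j) := by
    intro j a a' hle
    dsimp [F]
    split_ifs with h1 h2
    · exact le_refl _
    · exact absurd (hQmono j hle h1) h2
    · norm_num
    · exact le_refl _
  have hsumF : ∀ j, ∑ a, F j a = ((univ.filter (Q j)).card : ℝ) := by
    intro j; simp [hF, Finset.sum_boole]
  have hprodF : ∀ a, ∏ j, F j a = if (∀ j, Q j a) then (1:ℝ) else 0 := by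
    intro a
    by_cases h : ∀ j, Q j a
    · rw [if_pos h]
      exact Finset.prod_eq_one fun j _ => if_pos (h j)
    · rw [if_neg h]
      push_neg at h
      obtain ⟨j, hj⟩ := h
      exact Finset.prod_eq_zero (mem_univ j) (if_neg hj)
  have hcardα : (Fintype.card (Fin m → Fin b) : ℝ) = ((b ^ m : ℕ) : ℝ) := by
    simp [Fintype.card_fun]
  -- Harris
  have harris := aux_harris_iter (univ : Finset (Fin d)) F hF0 hFmono
  rw [hcardα, Finset.card_univ, Fintype.card_fin] at harris
  have hsumprod : ∑ a, ∏ j, F j a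
      = ((univ.filter fun a : Fin m → Fin b => ∀ j, Q j a).card : ℝ) := by
    rw [Finset.sum_congr rfl fun a _ => hprodF a]
    simp [Finset.sum_boole]
  rw [hsumprod] at harris
  -- Step C: per-coordinate count
  have hcount : ∀ j, ((b ^ m : ℕ) : ℝ) * z j ≤ ((univ.filter (Q j)).card : ℝ) := by
    intro j
    have hzj := hz j
    -- reindex by the permutation ρ so that the permuted digit sum becomes i/n
    set ρ : Equiv.Perm (Fin m) := (π j).symm.trans (Fin.revPerm) with hρ
    set E : (Fin m → Fin b) ≃ (Fin m → Fin b) :=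
      Equiv.arrowCongr ρ.symm (Equiv.refl (Fin b)) with hE
    have hQE : ∀ c : Fin m → Fin b, Q j (E c) ↔
        1 - z j < 1 / (b ^ m : ℝ) + ((e c : ℕ) : ℝ) / ((b ^ m : ℕ) : ℝ) := by
      intro c
      have hEc : ∀ p, E c p = c (ρ p) := by intro p; simp [hE]
      have key : ∑ k : Fin m, (((E c) (π j k) : ℕ) : ℝ) * ((b : ℝ))⁻¹ ^ ((k : ℕ) + 1)
          = ((e c : ℕ) : ℝ) / ((b ^ m : ℕ) : ℝ) := by
        have h1 : ∀ k : Fin m, (E c) (π j k) = c (Fin.rev k) := by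
          intro k; rw [hEc]; simp [hρ]
        simp only [h1]
        rw [Fintype.sum_equiv Fin.revPerm _
            (fun k : Fin m => ((c k : ℕ) : ℝ) * ((b:ℝ) ^ (k : ℕ) / (b:ℝ) ^ m)) ?_]
        · have hecast : ((e c : ℕ) : ℝ) = ∑ k : Fin m, ((c k : ℕ) : ℝ) * (b:ℝ) ^ (k : ℕ) := by
            rw [he, finFunctionFinEquiv_apply]
            push_cast
            rfl
          rw [hecast, Finset.sum_div]
          refine Finset.sum_congr rfl fun k _ => ?_
          push_cast
          ring
        · intro x
          simp only [Fin.revPerm_apply]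
          congr 1
          have hx1 : (Fin.rev x : ℕ) = m - ((x : ℕ) + 1) := by
            have := x.isLt
            simp only [Fin.val_rev]
          have hxm : (x : ℕ) + 1 ≤ m := x.isLt
          rw [hx1, pow_sub₀ (b:ℝ) (ne_of_gt hbR) hxm, inv_pow]
          field_simp
      rw [hQdef]
      simp only [key]
    have h1 : (univ.filter (Q j)).card
        = (univ.filter fun c : Fin m → Fin b =>
            1 - z j < 1 / (b ^ m : ℝ) + ((e c : ℕ) : ℝ) / ((b ^ m : ℕ) : ℝ)).card := by
      refine (Finset.card_equiv E fun c => ?_).symm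
      simp only [Finset.mem_filter, Finset.mem_univ, true_and]
      exact (hQE c).symm
    have h2 : (univ.filter fun c : Fin m → Fin b =>
            1 - z j < 1 / (b ^ m : ℝ) + ((e c : ℕ) : ℝ) / ((b ^ m : ℕ) : ℝ)).card
        = (univ.filter fun i : Fin (b ^ m) =>
            1 - z j < 1 / (b ^ m : ℝ) + ((i : ℕ) : ℝ) / ((b ^ m : ℕ) : ℝ)).card := by
      refine Finset.card_equiv e fun c => ?_
      simp only [Finset.mem_filter, Finset.mem_univ, true_and]
    rw [h1, h2]
    -- now count over Fin (b^m)
    set t : ℕ := ⌈((b ^ m : ℕ) : ℝ) * z j⌉₊ with ht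
    have htn : t ≤ b ^ m := by
      rw [ht]
      refine Nat.ceil_le.mpr ?_
      calc ((b ^ m : ℕ) : ℝ) * z j ≤ ((b ^ m : ℕ) : ℝ) * 1 :=
            mul_le_mul_of_nonneg_left hzj.2 hnR.le
        _ = ((b ^ m : ℕ) : ℝ) := mul_one _
    rcases Nat.eq_zero_or_pos t with ht0 | ht0
    · have h0 : ((b ^ m : ℕ) : ℝ) * z j ≤ 0 := by
        have hle := Nat.le_ceil (((b ^ m : ℕ) : ℝ) * z j)
        rw [← ht, ht0] at hle
        simpa using hle
      exact h0.trans (Nat.cast_nonneg _)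
    · have hlt : b ^ m - t < b ^ m := by omega
      have hsub : Finset.Ici (⟨b ^ m - t, hlt⟩ : Fin (b ^ m)) ⊆
          (univ.filter fun i : Fin (b ^ m) =>
            1 - z j < 1 / (b ^ m : ℝ) + ((i : ℕ) : ℝ) / ((b ^ m : ℕ) : ℝ)) := by
        intro i hi
        rw [Finset.mem_Ici] at hi
        have hival : b ^ m - t ≤ (i : ℕ) := hi
        rw [Finset.mem_filter]
        refine ⟨mem_univ _, ?_⟩
        have htlt : (t : ℝ) < ((b ^ m : ℕ) : ℝ) * z j + 1 := by
          rw [ht]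
          exact Nat.ceil_lt_add_one (mul_nonneg hnR.le hzj.1)
        have hcast : (((b ^ m - t : ℕ)) : ℝ) = ((b ^ m : ℕ) : ℝ) - (t : ℝ) := by
          push_cast [htn]
          ring
        have hige : ((b ^ m : ℕ) : ℝ) - (t : ℝ) ≤ ((i : ℕ) : ℝ) := by
          rw [← hcast]
          exact_mod_cast hival
        have hbm : ((b:ℝ) ^ m) = ((b ^ m : ℕ) : ℝ) := by push_cast; ring
        rw [hbm, ← add_div, lt_div_iff₀ hnR]
        nlinarith [hige, htlt]
      have hcardIci : (Finset.Ici (⟨b ^ m - t, hlt⟩ : Fin (b ^ m))).card = t := by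
        rw [Fin.card_Ici]
        show b ^ m - (b ^ m - t) = t
        omega
      have hcc := Finset.card_le_card hsub
      rw [hcardIci] at hcc
      calc ((b ^ m : ℕ) : ℝ) * z j ≤ (t : ℝ) := Nat.le_ceil _
        _ ≤ _ := by exact_mod_cast hcc
  -- combine
  rw [hcard]
  set C : ℝ := ((univ.filter fun a : Fin m → Fin b => ∀ j, Q j a).card : ℝ) with hC
  have hprod_le : ∏ j : Fin d, (((b ^ m : ℕ) : ℝ) * z j) ≤ ∏ j, (((univ.filter (Q j)).card : ℝ)) := by
    refine Finset.prod_le_prod (fun j _ => ?_) (fun j _ => hcount j)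
    have := (hz j).1
    positivity
  have hprodn : ∏ j : Fin d, (((b ^ m : ℕ) : ℝ) * z j)
      = ((b ^ m : ℕ) : ℝ) ^ d * ∏ j, z j := by
    rw [Finset.prod_mul_distrib, Finset.prod_const, Finset.card_univ, Fintype.card_fin]
  have hsumF' : ∏ j, (∑ a, F j a) = ∏ j, (((univ.filter (Q j)).card : ℝ)) :=
    Finset.prod_congr rfl fun j _ => hsumF j
  rw [hsumF'] at harris
  have hchain : ((b ^ m : ℕ) : ℝ) * (((b ^ m : ℕ) : ℝ) ^ d * ∏ j, z j)
      ≤ ((b ^ m : ℕ) : ℝ) ^ d * C := by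
    calc ((b ^ m : ℕ) : ℝ) * (((b ^ m : ℕ) : ℝ) ^ d * ∏ j, z j)
        = ((b ^ m : ℕ) : ℝ) * ∏ j : Fin d, (((b ^ m : ℕ) : ℝ) * z j) := by rw [hprodn]
      _ ≤ ((b ^ m : ℕ) : ℝ) * ∏ j, (((univ.filter (Q j)).card : ℝ)) :=
          mul_le_mul_of_nonneg_left hprod_le hnR.le
      _ ≤ ((b ^ m : ℕ) : ℝ) ^ d * C := harris
  have hd0 : (0:ℝ) < ((b ^ m : ℕ) : ℝ) ^ d := by positivity
  have hfin : ((b ^ m : ℕ) : ℝ) * ∏ j, z j ≤ C := by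
    refine le_of_mul_le_mul_left ?_ hd0
    calc ((b ^ m : ℕ) : ℝ) ^ d * (((b ^ m : ℕ) : ℝ) * ∏ j, z j)
          = ((b ^ m : ℕ) : ℝ) * (((b ^ m : ℕ) : ℝ) ^ d * ∏ j, z j) := by ring
        _ ≤ ((b ^ m : ℕ) : ℝ) ^ d * C := hchain
  have hbm : ((b:ℝ) ^ m) = ((b ^ m : ℕ) : ℝ) := by push_cast; ring
  rw [hbm, le_div_iff₀ hnR]
  calc (∏ j, z j) * ((b ^ m : ℕ) : ℝ) = ((b ^ m : ℕ) : ℝ) * ∏ j, z j := by ring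
    _ ≤ C := hfin
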